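/- For every a ≥ 0, every μ > 0, and every r with 0 ≤ r < 1/μ, 1 − (1/(a + 1/μ))·∫_{a}^{∞} μ·exp(−μ(t−a))·min(r, max(0, a + 1/μ − t)) dt = (1 + a·μ − μ·r − exp(−1) + exp(μ·r − 1))/(1 + a·μ). -/

import Mathlib

open MeasureTheory Real

/-- First case of the worst-case efficiency formula (equation (19)) of the
paper: for shifted-exponential runtimes (shift `a ≥ 0`, rate `μ`) and
round-trip time `r < 1/μ`, the efficiency `1 − E[Tu]/E[β]` equals
`(1 + aμ − μr − e⁻¹ + e^{μr−1})/(1 + aμ)`. -/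
theorem efficiency_small_rtt
    (a : ℝ) (ha : 0 ≤ a) (μ : ℝ) (hμ : 0 < μ)
    (r : ℝ) (hr0 : 0 ≤ r) (hr : r < 1 / μ) :
    1 - (1 / (a + 1 / μ)) *
        ∫ t in Set.Ioi a,
          μ * Real.exp (-μ * (t - a)) * min r (max 0 (a + 1 / μ - t))
      = (1 + a * μ - μ * r - Real.exp (-1) + Real.exp (μ * r - 1)) / (1 + a * μ) := by
  have hμ' : μ ≠ 0 := ne_of_gt hμ
  have hμinv : 0 < 1 / μ := by positivity
  set c := a + 1 / μ with hc
  set b := a + 1 / μ - r with hb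
  have hab : a ≤ b := by rw [hb]; linarith [hr.le]
  have hbc : b ≤ c := by rw [hb, ← hc]; linarith
  have hac : a ≤ c := hab.trans hbc
  set f : ℝ → ℝ := fun t => μ * Real.exp (-μ * (t - a)) * min r (max 0 (c - t)) with hf
  have hfc : Continuous f := by
    rw [hf]; fun_prop
  -- derivative of the exponential factor
  have hexp : ∀ t : ℝ, HasDerivAt (fun t => Real.exp (-μ * (t - a)))
      (-μ * Real.exp (-μ * (t - a))) t := by
    intro t
    have h1 : HasDerivAt (fun t : ℝ => -μ * (t - a)) (-μ) t := by
      simpa using ((hasDerivAt_id t).sub_const a).const_mul (-μ)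
    simpa [mul_comm] using h1.exp
  -- integral over (c, ∞) vanishes
  have h0 : ∫ t in Set.Ioi c, f t = 0 := by
    rw [MeasureTheory.setIntegral_congr_fun (g := fun _ => (0:ℝ)) measurableSet_Ioi]
    · simp
    · intro t ht
      have h1 : c - t ≤ 0 := by simp only [Set.mem_Ioi] at ht; linarith
      simp [hf, max_eq_left h1, min_eq_right hr0]
  have hI1 : IntegrableOn f (Set.Ioc a c) := hfc.integrableOn_Ioc
  have hI2 : IntegrableOn f (Set.Ioi c) := by
    apply (integrableOn_congr_fun (g := fun _ => (0:ℝ)) _ measurableSet_Ioi).mpr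
    · exact integrableOn_zero
    · intro t ht
      have h1 : c - t ≤ 0 := by simp only [Set.mem_Ioi] at ht; linarith
      simp [hf, max_eq_left h1, min_eq_right hr0]
  have hsplit : ∫ t in Set.Ioi a, f t
      = (∫ t in Set.Ioc a c, f t) + ∫ t in Set.Ioi c, f t := by
    rw [← MeasureTheory.setIntegral_union (Set.Ioc_disjoint_Ioi le_rfl)
      measurableSet_Ioi hI1 hI2, Set.Ioc_union_Ioi_eq_Ioi hac]
  have h3 : ∫ t in Set.Ioc a c, f t = ∫ t in a..c, f t :=
    (intervalIntegral.integral_of_le hac).symm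
  have h4 : ∫ t in a..c, f t = (∫ t in a..b, f t) + ∫ t in b..c, f t :=
    (intervalIntegral.integral_add_adjacent_intervals
      (hfc.intervalIntegrable a b) (hfc.intervalIntegrable b c)).symm
  -- first piece
  have h5 : ∫ t in a..b, f t = r - r * Real.exp (μ * r - 1) := by
    have heq : Set.EqOn f (fun t => μ * Real.exp (-μ * (t - a)) * r) (Set.uIcc a b) := by
      intro t ht
      rw [Set.uIcc_of_le hab] at ht
      have h1 : r ≤ c - t := by
        have := ht.2; rw [hb] at this; rw [hc]; linarith
      have h2 : (0:ℝ) ≤ c - t := le_trans hr0 h1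
      simp only [hf, max_eq_right h2, min_eq_left h1]
    rw [intervalIntegral.integral_congr heq]
    have key : ∀ t ∈ Set.uIcc a b,
        HasDerivAt (fun t => -(r * Real.exp (-μ * (t - a))))
          (μ * Real.exp (-μ * (t - a)) * r) t := by
      intro t _
      have := ((hexp t).const_mul r).neg
      refine this.congr_deriv ?_
      ring
    rw [intervalIntegral.integral_eq_sub_of_hasDerivAt key
      ((by fun_prop : Continuous fun t => μ * Real.exp (-μ * (t - a)) * r).intervalIntegrable a b)]
    have hval : Real.exp (-μ * (b - a)) = Real.exp (μ * r - 1) := by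
      congr 1
      rw [hb]; field_simp; ring
    rw [hval]
    simp
    ring
  -- second piece
  have h6 : ∫ t in b..c, f t
      = (1 / μ) * Real.exp (-1) - (1 / μ - r) * Real.exp (μ * r - 1) := by
    have heq : Set.EqOn f (fun t => μ * Real.exp (-μ * (t - a)) * (c - t)) (Set.uIcc b c) := by
      intro t ht
      rw [Set.uIcc_of_le hbc] at ht
      have h1 : c - t ≤ r := by
        have := ht.1; rw [hb] at this; rw [hc]; linarith
      have h2 : (0:ℝ) ≤ c - t := by
        have := ht.2; linarith
      simp only [hf, max_eq_right h2, min_eq_right h1]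
    rw [intervalIntegral.integral_congr heq]
    have key : ∀ t ∈ Set.uIcc b c,
        HasDerivAt (fun t => (t - a) * Real.exp (-μ * (t - a)))
          (μ * Real.exp (-μ * (t - a)) * (c - t)) t := by
      intro t _
      have h1 : HasDerivAt (fun t : ℝ => t - a) 1 t := (hasDerivAt_id t).sub_const a
      have := h1.mul (hexp t)
      refine this.congr_deriv ?_
      rw [hc]; field_simp; ring
    rw [intervalIntegral.integral_eq_sub_of_hasDerivAt key
      ((by fun_prop :
        Continuous fun t => μ * Real.exp (-μ * (t - a)) * (c - t)).intervalIntegrable b c)]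
    have hv1 : Real.exp (-μ * (c - a)) = Real.exp (-1) := by
      congr 1; rw [hc]; field_simp; ring
    have hv2 : Real.exp (-μ * (b - a)) = Real.exp (μ * r - 1) := by
      congr 1; rw [hb]; field_simp; ring
    have hca : c - a = 1 / μ := by rw [hc]; ring
    have hba : b - a = 1 / μ - r := by rw [hb]; ring
    rw [hv1, hv2, hca, hba]
  -- assemble
  rw [hsplit, h0, h3, h4, h5, h6]
  have hcpos : 0 < c := by rw [hc]; linarith
  have h1aμ : 0 < 1 + a * μ := by positivity
  rw [hc]
  field_simp
  ring
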